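/- arXiv:1905.03927 — 2 statements merged into one kernel-verified Lean document; each statement's English description precedes it below -/
import Mathlib

section
/- (Global convergence of SOVI) Let S and A be finite nonempty sets, p : S × A × S → ℝ with p(j|i,a) ≥ 0 and Σ_{j∈S} p(j|i,a) = 1 for all (i,a), r : S × A → ℝ, 0 ≤ γ < 1, and N > 0. Let Q' be the unique fixed point of the modified Bellman operator U. Then for any initial Q_0 : S × A → ℝ, the SOVI iterates Q_{n+1} = Q_n − (I − J_U(Q_n))^{-1}·(Q_n − UQ_n), where J_U(Q)((i,a),(k,c)) = γ·p(k|i,a)·e^{N·Q(k,c)}/(Σ_{b∈A} e^{N·Q(k,b)}), converge to Q' as n → ∞. -/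
/-- log-sum-exp with inverse temperature `N`. -/
noncomputable def lseN {A : Type*} [Fintype A] (N : ℝ) (f : A → ℝ) : ℝ :=
  (1 / N) * Real.log (∑ b, Real.exp (N * f b))

section lse
variable {A : Type*} [Fintype A] [Nonempty A] {N : ℝ} (hN : 0 < N)

lemma sumexp_pos (f : A → ℝ) : 0 < ∑ b, Real.exp (N * f b) :=
  Finset.sum_pos (fun b _ => Real.exp_pos _) Finset.univ_nonempty

include hN

lemma lseN_mono {f g : A → ℝ} (h : ∀ b, f b ≤ g b) : lseN N f ≤ lseN N g := by
  unfold lseN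
  apply mul_le_mul_of_nonneg_left _ (by positivity)
  apply Real.log_le_log (sumexp_pos f)
  exact Finset.sum_le_sum fun b _ =>
    Real.exp_le_exp.2 (mul_le_mul_of_nonneg_left (h b) hN.le)

lemma lseN_shift (f : A → ℝ) (c : ℝ) : lseN N (fun b => f b + c) = lseN N f + c := by
  unfold lseN
  have : ∀ b : A, Real.exp (N * (f b + c)) = Real.exp (N * f b) * Real.exp (N * c) := by
    intro b; rw [← Real.exp_add]; ring_nf
  simp only [this, ← Finset.sum_mul]
  rw [Real.log_mul (sumexp_pos f).ne' (Real.exp_pos _).ne', Real.log_exp]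
  field_simp

lemma lseN_grad (f g : A → ℝ) :
    lseN N f + ∑ c, (Real.exp (N * f c) / ∑ b, Real.exp (N * f b)) * (g c - f c)
      ≤ lseN N g := by
  set E : ℝ := ∑ b, Real.exp (N * f b) with hE
  have hEpos : 0 < E := sumexp_pos f
  set w : A → ℝ := fun c => Real.exp (N * f c) / E with hw
  have hw0 : ∀ c ∈ Finset.univ (α := A), 0 ≤ w c := fun c _ => by positivity
  have hw1 : ∑ c, w c = 1 := by
    simp only [hw, ← Finset.sum_div]; field_simp; exact hE.symm
  -- Jensen for exp
  have jensen : Real.exp (∑ c, w c • (N * (g c - f c))) ≤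
      ∑ c, w c • Real.exp (N * (g c - f c)) := by
    have := convexOn_exp.map_sum_le (t := Finset.univ) (p := fun c => N * (g c - f c))
      hw0 hw1 (fun c _ => Set.mem_univ _)
    simpa using this
  have key : ∑ c, w c • Real.exp (N * (g c - f c)) = (∑ c, Real.exp (N * g c)) / E := by
    rw [Finset.sum_div]
    refine Finset.sum_congr rfl fun c _ => ?_
    simp only [hw, smul_eq_mul]
    rw [div_mul_eq_mul_div, ← Real.exp_add]
    ring_nf
  rw [key] at jensen
  have hG : 0 < (∑ c, Real.exp (N * g c)) / E := div_pos (sumexp_pos g) hEpos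
  have hlog : ∑ c, w c • (N * (g c - f c)) ≤ Real.log ((∑ c, Real.exp (N * g c)) / E) :=
    (Real.le_log_iff_exp_le hG).2 jensen
  rw [Real.log_div (sumexp_pos g).ne' hEpos.ne'] at hlog
  unfold lseN
  rw [← hE]
  have expand : ∑ c, w c • (N * (g c - f c)) = N * ∑ c, w c * (g c - f c) := by
    rw [Finset.mul_sum]; refine Finset.sum_congr rfl fun c _ => ?_; simp [smul_eq_mul]; ring
  rw [expand] at hlog
  have h2 := mul_le_mul_of_nonneg_left hlog (by positivity : (0:ℝ) ≤ 1/N)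
  have h3 : (1/N) * (N * ∑ c, w c * (g c - f c)) = ∑ c, w c * (g c - f c) := by
    field_simp
  have hsum : ∑ c, Real.exp (N * f c) / E * (g c - f c) = ∑ c, w c * (g c - f c) := rfl
  rw [mul_sub] at h2
  linarith
end lse

/-- The modified (log-sum-exp) Bellman operator `U` on `Q : S × A → ℝ`:
`(UQ)(i,a) = r(i,a) + γ·Σ_j p(j|i,a)·(1/N)·log(Σ_b e^{N·Q(j,b)})`. -/
noncomputable def modBellmanU {S A : Type*} [Fintype S] [Fintype A]
    (p : S → A → S → ℝ) (r : S → A → ℝ) (γ N : ℝ) (Q : S × A → ℝ) : S × A → ℝ :=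
  fun ia => r ia.1 ia.2 + γ * ∑ j, p ia.1 ia.2 j *
    ((1 / N) * Real.log (∑ b, Real.exp (N * Q (j, b))))

/-- The Jacobian matrix of the modified Bellman operator:
`J_U(Q)((i,a),(k,c)) = γ·p(k|i,a)·e^{N·Q(k,c)} / Σ_b e^{N·Q(k,b)}`. -/
noncomputable def jacU {S A : Type*} [Fintype A]
    (p : S → A → S → ℝ) (γ N : ℝ) (Q : S × A → ℝ) : Matrix (S × A) (S × A) ℝ :=
  Matrix.of fun ia kc =>
    γ * p ia.1 ia.2 kc.1 * (Real.exp (N * Q kc) / ∑ b, Real.exp (N * Q (kc.1, b)))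

section opU
variable {S A : Type*} [Fintype S] [Fintype A] [Nonempty S] [Nonempty A]
  {p : S → A → S → ℝ} {r : S → A → ℝ} {γ N : ℝ}
  (hp0 : ∀ i a j, 0 ≤ p i a j) (hp1 : ∀ i a, ∑ j, p i a j = 1)
  (hγ0 : 0 ≤ γ) (hγ1 : γ < 1) (hN : 0 < N)

lemma modBellmanU_eq_lse (Q : S × A → ℝ) (ia : S × A) :
    modBellmanU p r γ N Q ia =
      r ia.1 ia.2 + γ * ∑ j, p ia.1 ia.2 j * lseN N (fun b => Q (j, b)) := rfl

include hp0 hγ0 hN in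
lemma modBellmanU_mono {Q R : S × A → ℝ} (h : ∀ x, Q x ≤ R x) (x : S × A) :
    modBellmanU p r γ N Q x ≤ modBellmanU p r γ N R x := by
  rw [modBellmanU_eq_lse, modBellmanU_eq_lse]
  have : ∑ j, p x.1 x.2 j * lseN N (fun b => Q (j, b))
      ≤ ∑ j, p x.1 x.2 j * lseN N (fun b => R (j, b)) :=
    Finset.sum_le_sum fun j _ => mul_le_mul_of_nonneg_left
      (lseN_mono hN fun b => h (j, b)) (hp0 _ _ _)
  nlinarith [mul_le_mul_of_nonneg_left this hγ0]

include hp1 hN in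
lemma modBellmanU_shift (Q : S × A → ℝ) (c : ℝ) (x : S × A) :
    modBellmanU p r γ N (fun y => Q y + c) x = modBellmanU p r γ N Q x + γ * c := by
  rw [modBellmanU_eq_lse, modBellmanU_eq_lse]
  have : ∀ j : S, lseN N (fun b => Q (j, b) + c) = lseN N (fun b => Q (j, b)) + c :=
    fun j => lseN_shift hN _ c
  simp only [this, mul_add, Finset.sum_add_distrib, ← Finset.sum_mul, hp1]
  ring

include hp0 hγ0 hN in
lemma modBellmanU_convex (Q R : S × A → ℝ) (x : S × A) :
    modBellmanU p r γ N Q x + (jacU p γ N Q).mulVec (fun y => R y - Q y) x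
      ≤ modBellmanU p r γ N R x := by
  rw [modBellmanU_eq_lse, modBellmanU_eq_lse]
  have hmv : (jacU p γ N Q).mulVec (fun y => R y - Q y) x =
      γ * ∑ k, p x.1 x.2 k *
        ∑ c, (Real.exp (N * Q (k, c)) / ∑ b, Real.exp (N * Q (k, b))) * (R (k, c) - Q (k, c)) := by
    simp only [Matrix.mulVec, dotProduct, jacU, Matrix.of_apply]
    rw [Fintype.sum_prod_type, Finset.mul_sum]
    refine Finset.sum_congr rfl fun k _ => ?_
    rw [Finset.mul_sum, Finset.mul_sum]
    exact Finset.sum_congr rfl fun c _ => by ring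
  rw [hmv]
  have key : ∑ k, p x.1 x.2 k * lseN N (fun b => Q (k, b))
      + ∑ k, p x.1 x.2 k *
          ∑ c, (Real.exp (N * Q (k, c)) / ∑ b, Real.exp (N * Q (k, b))) * (R (k, c) - Q (k, c))
      ≤ ∑ k, p x.1 x.2 k * lseN N (fun b => R (k, b)) := by
    rw [← Finset.sum_add_distrib]
    refine Finset.sum_le_sum fun k _ => ?_
    have hg := lseN_grad hN (fun b => Q (k, b)) (fun b => R (k, b))
    calc p x.1 x.2 k * lseN N (fun b => Q (k, b))
          + p x.1 x.2 k * ∑ c, (Real.exp (N * Q (k, c)) / ∑ b, Real.exp (N * Q (k, b)))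
              * (R (k, c) - Q (k, c))
        = p x.1 x.2 k * (lseN N (fun b => Q (k, b))
          + ∑ c, (Real.exp (N * Q (k, c)) / ∑ b, Real.exp (N * Q (k, b)))
              * (R (k, c) - Q (k, c))) := by ring
      _ ≤ p x.1 x.2 k * lseN N (fun b => R (k, b)) :=
          mul_le_mul_of_nonneg_left hg (hp0 _ _ _)
  nlinarith [mul_le_mul_of_nonneg_left key hγ0]

include hp0 hγ0 in
lemma jacU_nonneg (Q : S × A → ℝ) (x y : S × A) : 0 ≤ jacU p γ N Q x y := by
  have := sumexp_pos (N := N) (fun b => Q (y.1, b))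
  unfold jacU
  simp only [Matrix.of_apply]
  have h1 : 0 ≤ Real.exp (N * Q y) / ∑ b, Real.exp (N * Q (y.1, b)) :=
    div_nonneg (Real.exp_pos _).le (by positivity)
  exact mul_nonneg (mul_nonneg hγ0 (hp0 _ _ _)) h1

include hp1 in
lemma jacU_rowsum (Q : S × A → ℝ) (x : S × A) : ∑ y, jacU p γ N Q x y = γ := by
  unfold jacU
  simp only [Matrix.of_apply]
  rw [Fintype.sum_prod_type]
  have : ∀ k : S, ∑ c, γ * p x.1 x.2 k * (Real.exp (N * Q (k, c)) / ∑ b, Real.exp (N * Q (k, b)))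
      = γ * p x.1 x.2 k := by
    intro k
    rw [← Finset.mul_sum, ← Finset.sum_div]
    rw [div_self (sumexp_pos (N := N) (fun b => Q (k, b))).ne', mul_one]
  simp only [this, ← Finset.mul_sum, hp1, mul_one]

end opU

section matrixAux
variable {ι : Type*} [Fintype ι] [Nonempty ι] [DecidableEq ι] {γ : ℝ}

lemma vec_nonneg_of_eq (J : Matrix ι ι ℝ) (hJ0 : ∀ x y, 0 ≤ J x y)
    (hJs : ∀ x, ∑ y, J x y = γ) (hγ1 : γ < 1) (v g : ι → ℝ)
    (hv : ∀ x, v x = J.mulVec v x + g x) (hg : ∀ x, 0 ≤ g x) : ∀ x, 0 ≤ v x := by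
  obtain ⟨x0, -, hx0⟩ := Finset.exists_min_image Finset.univ v Finset.univ_nonempty
  have hJv : γ * v x0 ≤ J.mulVec v x0 := by
    simp only [Matrix.mulVec, dotProduct]
    calc γ * v x0 = (∑ y, J x0 y) * v x0 := by rw [hJs]
      _ = ∑ y, J x0 y * v x0 := Finset.sum_mul _ _ _
      _ ≤ ∑ y, J x0 y * v y :=
          Finset.sum_le_sum fun y _ =>
            mul_le_mul_of_nonneg_left (hx0 y (Finset.mem_univ y)) (hJ0 _ _)
  have h0 : 0 ≤ v x0 := by nlinarith [hv x0, hg x0]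
  exact fun x => le_trans h0 (hx0 x (Finset.mem_univ x))

lemma det_one_sub_ne_zero (J : Matrix ι ι ℝ) (hJ0 : ∀ x y, 0 ≤ J x y)
    (hJs : ∀ x, ∑ y, J x y = γ) (hγ0 : 0 ≤ γ) (hγ1 : γ < 1) :
    ((1 : Matrix ι ι ℝ) - J).det ≠ 0 := by
  intro hdet
  obtain ⟨v, hv0, hveq⟩ := (Matrix.exists_mulVec_eq_zero_iff).2 hdet
  have heq : ∀ x, v x = J.mulVec v x := by
    intro x
    have := congrFun hveq x
    simp only [Matrix.sub_mulVec, Matrix.one_mulVec, Pi.sub_apply, Pi.zero_apply] at this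
    linarith
  obtain ⟨x0, -, hx0⟩ := Finset.exists_max_image Finset.univ (fun x => |v x|)
    Finset.univ_nonempty
  have habs : |v x0| ≤ γ * |v x0| := by
    calc |v x0| = |J.mulVec v x0| := by rw [← heq]
      _ ≤ ∑ y, |J x0 y * v y| := by
          simp only [Matrix.mulVec, dotProduct]
          exact Finset.abs_sum_le_sum_abs _ _
      _ = ∑ y, J x0 y * |v y| := by
          refine Finset.sum_congr rfl fun y _ => ?_
          rw [abs_mul, abs_of_nonneg (hJ0 _ _)]
      _ ≤ ∑ y, J x0 y * |v x0| :=
          Finset.sum_le_sum fun y _ =>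
            mul_le_mul_of_nonneg_left (hx0 y (Finset.mem_univ y)) (hJ0 _ _)
      _ = γ * |v x0| := by rw [← Finset.sum_mul, hJs]
  have hz : |v x0| = 0 := by nlinarith [abs_nonneg (v x0)]
  apply hv0
  funext x
  have h1 := hx0 x (Finset.mem_univ x)
  have h2 := abs_nonneg (v x)
  have : |v x| = 0 := le_antisymm (hz ▸ h1) h2
  simpa using abs_eq_zero.mp this

end matrixAux

/-- **Global convergence of SOVI.** If `Q'` is the unique fixed point of the modified
Bellman operator `U`, then from any initial `Q_0` the SOVI iterates
`Q_{n+1} = Q_n − (I − J_U(Q_n))⁻¹ (Q_n − U Q_n)` converge to `Q'`. -/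
theorem sovi_global_convergence {S A : Type*}
    [Fintype S] [Fintype A] [Nonempty S] [Nonempty A] [DecidableEq S] [DecidableEq A]
    (p : S → A → S → ℝ) (hp0 : ∀ i a j, 0 ≤ p i a j) (hp1 : ∀ i a, ∑ j, p i a j = 1)
    (r : S → A → ℝ) (γ : ℝ) (hγ0 : 0 ≤ γ) (hγ1 : γ < 1) (N : ℝ) (hN : 0 < N)
    (Q' : S × A → ℝ) (hQ' : modBellmanU p r γ N Q' = Q')
    (Q : ℕ → S × A → ℝ)
    (hiter : ∀ n : ℕ, Q (n + 1) = Q n -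
      ((1 : Matrix (S × A) (S × A) ℝ) - jacU p γ N (Q n))⁻¹.mulVec
        (Q n - modBellmanU p r γ N (Q n))) :
    Filter.Tendsto Q Filter.atTop (nhds Q') := by
  classical
  have hJ0 : ∀ n x y, 0 ≤ jacU p γ N (Q n) x y := fun n => jacU_nonneg hp0 hγ0 (Q n)
  have hJs : ∀ n x, ∑ y, jacU p γ N (Q n) x y = γ := fun n => jacU_rowsum hp1 (Q n)
  have hdet : ∀ n, ((1 : Matrix (S × A) (S × A) ℝ) - jacU p γ N (Q n)).det ≠ 0 :=
    fun n => det_one_sub_ne_zero _ (hJ0 n) (hJs n) hγ0 hγ1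
  -- Newton equation
  have eqn : ∀ n x, Q (n + 1) x = modBellmanU p r γ N (Q n) x
      + (jacU p γ N (Q n)).mulVec (fun y => Q (n + 1) y - Q n y) x := by
    intro n x
    set J := jacU p γ N (Q n) with hJ
    set M := (1 : Matrix (S × A) (S × A) ℝ) - J with hM
    have hmul : M * M⁻¹ = 1 := Matrix.mul_nonsing_inv M (isUnit_iff_ne_zero.2 (hdet n))
    have h1 : Q (n + 1) - Q n = -(M⁻¹.mulVec (Q n - modBellmanU p r γ N (Q n))) := by
      rw [hiter n]; abel
    have h2 : M.mulVec (Q (n + 1) - Q n) = -(Q n - modBellmanU p r γ N (Q n)) := by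
      rw [h1, Matrix.mulVec_neg, Matrix.mulVec_mulVec, hmul, Matrix.one_mulVec]
    have h3 := congrFun h2 x
    have hfun : (fun y => Q (n + 1) y - Q n y) = Q (n + 1) - Q n := rfl
    rw [hfun]
    rw [hM, Matrix.sub_mulVec, Matrix.one_mulVec] at h3
    simp only [Pi.sub_apply, Pi.neg_apply] at h3
    linarith
  -- iterates are below a fixed point of U, and subsolutions
  have hbelow : ∀ n x, Q (n + 1) x ≤ modBellmanU p r γ N (Q (n + 1)) x := by
    intro n x
    calc Q (n + 1) x = modBellmanU p r γ N (Q n) x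
        + (jacU p γ N (Q n)).mulVec (fun y => Q (n + 1) y - Q n y) x := eqn n x
      _ ≤ modBellmanU p r γ N (Q (n + 1)) x := modBellmanU_convex hp0 hγ0 hN _ _ x
  have hleQ' : ∀ n x, Q (n + 1) x ≤ Q' x := by
    intro n
    obtain ⟨x0, -, hx0⟩ := Finset.exists_max_image Finset.univ
      (fun x => Q (n + 1) x - Q' x) Finset.univ_nonempty
    set c := Q (n + 1) x0 - Q' x0 with hc
    have hub : ∀ y, Q (n + 1) y ≤ Q' y + c := by
      intro y; have := hx0 y (Finset.mem_univ y); linarith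
    have h1 : modBellmanU p r γ N (Q (n + 1)) x0
        ≤ modBellmanU p r γ N (fun y => Q' y + c) x0 := modBellmanU_mono hp0 hγ0 hN hub x0
    have h2 : modBellmanU p r γ N (fun y => Q' y + c) x0 = Q' x0 + γ * c := by
      rw [modBellmanU_shift hp1 hN, congrFun hQ' x0]
    have h3 := hbelow n x0
    have hcle : c ≤ 0 := by nlinarith
    intro x; have := hx0 x (Finset.mem_univ x); linarith
  -- iterates dominate value iteration
  have hgeU : ∀ n x, modBellmanU p r γ N (Q (n + 1)) x ≤ Q (n + 2) x := by
    intro n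
    have hd : ∀ x, 0 ≤ Q (n + 2) x - Q (n + 1) x := by
      apply vec_nonneg_of_eq (jacU p γ N (Q (n + 1))) (hJ0 (n + 1)) (hJs (n + 1)) hγ1
        (fun y => Q (n + 2) y - Q (n + 1) y)
        (fun x => modBellmanU p r γ N (Q (n + 1)) x - Q (n + 1) x)
      · intro x; have := eqn (n + 1) x; linarith
      · intro x; have := hbelow n x; linarith
    intro x
    have hJd : 0 ≤ (jacU p γ N (Q (n + 1))).mulVec (fun y => Q (n + 2) y - Q (n + 1) y) x := by
      simp only [Matrix.mulVec, dotProduct]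
      exact Finset.sum_nonneg fun y _ => mul_nonneg (hJ0 (n + 1) x y) (hd y)
    have := eqn (n + 1) x
    linarith
  -- error sequence and geometric decay
  set e : ℕ → ℝ := fun n => Finset.univ.sup' Finset.univ_nonempty
    (fun x => Q' x - Q (n + 1) x) with he
  have hbound : ∀ n x, Q' x - Q (n + 1) x ≤ e n := by
    intro n x
    simp only [he]
    exact Finset.le_sup' (fun x => Q' x - Q (n + 1) x) (Finset.mem_univ x)
  have hrec : ∀ n, e (n + 1) ≤ γ * e n := by
    intro n
    simp only [he]
    apply Finset.sup'_le
    intro x _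
    have h1 : ∀ y, Q' y ≤ Q (n + 1) y + e n := by
      intro y; have := hbound n y; linarith
    have h2 : modBellmanU p r γ N Q' x ≤ modBellmanU p r γ N (fun y => Q (n + 1) y + e n) x :=
      modBellmanU_mono hp0 hγ0 hN h1 x
    have h3 : modBellmanU p r γ N (fun y => Q (n + 1) y + e n) x
        = modBellmanU p r γ N (Q (n + 1)) x + γ * e n := modBellmanU_shift hp1 hN _ _ x
    have h4 := hgeU n x
    have h5 := congrFun hQ' x
    linarith
  have hgeo : ∀ n, e n ≤ γ ^ n * e 0 := by
    intro n
    induction n with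
    | zero => simp
    | succ k ih =>
      calc e (k + 1) ≤ γ * e k := hrec k
        _ ≤ γ * (γ ^ k * e 0) := mul_le_mul_of_nonneg_left ih hγ0
        _ =γ ^ (k + 1) * e 0 := by ring
  -- conclude
  rw [tendsto_pi_nhds]
  intro x
  have hshift : Filter.Tendsto (fun n => Q (n + 1) x) Filter.atTop (nhds (Q' x)) := by
    have hlim : Filter.Tendsto (fun n : ℕ => Q' x - γ ^ n * e 0) Filter.atTop (nhds (Q' x)) := by
      have h := ((tendsto_pow_atTop_nhds_zero_of_lt_one hγ0 hγ1).mul_const (e 0))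
      simpa using Filter.Tendsto.sub (tendsto_const_nhds (x := Q' x)) h
    apply tendsto_of_tendsto_of_tendsto_of_le_of_le hlim
      (tendsto_const_nhds (x := Q' x))
    · intro n
      show Q' x - γ ^ n * e 0 ≤ Q (n + 1) x
      have h1 := hbound n x; have h2 := hgeo n; linarith
    · intro n
      show Q (n + 1) x ≤ Q' x
      exact hleQ' n x
  exact (Filter.tendsto_add_atTop_iff_nat 1).1 hshift
end

section
/- (Second order convergence of SOVI) Let S and A be finite nonempty sets, p : S × A × S → ℝ with p(j|i,a) ≥ 0 and Σ_{j∈S} p(j|i,a) = 1 for all (i,a), r : S × A → ℝ, 0 ≤ γ < 1, and N > 0. Let Q* be the unique fixed point of the modified Bellman operator U, let Q_0 : S × A → ℝ be arbitrary, and let Q_{n+1} = Q_n − (I − J_U(Q_n))^{-1}·(Q_n − UQ_n) be the SOVI iterates. Then there exists a constant k > 0 such that for all n ≥ 0, ‖Q_{n+1} − Q*‖ ≤ k·‖Q_n − Q*‖², where ‖·‖ is the sup norm on ℝ^{S×A}. -/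
/-- Sup norm of `Q : S × A → ℝ`. -/
noncomputable def qSupNorm {S A : Type*} [Fintype S] [Fintype A] [Nonempty S] [Nonempty A]
    (Q : S × A → ℝ) : ℝ :=
  Finset.univ.sup' Finset.univ_nonempty (fun ia : S × A => |Q ia|)

open Finset Set

namespace SOVIAux
set_option linter.unusedSectionVars false

set_option linter.unusedSectionVars false
variable {A : Type*} [Fintype A] [Nonempty A]

noncomputable def smZ (N : ℝ) (v : A → ℝ) : ℝ := ∑ b, Real.exp (N * v b)
noncomputable def sm (N : ℝ) (v : A → ℝ) (c : A) : ℝ := Real.exp (N * v c) / smZ N v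

lemma smZ_pos (N : ℝ) (v : A → ℝ) : 0 < smZ N v :=
  Finset.sum_pos (fun _ _ => Real.exp_pos _) Finset.univ_nonempty

lemma sm_nonneg (N : ℝ) (v : A → ℝ) (c : A) : 0 ≤ sm N v c :=
  div_nonneg (Real.exp_pos _).le (smZ_pos N v).le

lemma exp_le_smZ (N : ℝ) (v : A → ℝ) (c : A) : Real.exp (N * v c) ≤ smZ N v :=
  Finset.single_le_sum (fun b _ => (Real.exp_pos (N * v b)).le) (Finset.mem_univ c)

lemma sm_le_one (N : ℝ) (v : A → ℝ) (c : A) : sm N v c ≤ 1 :=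
  div_le_one_of_le₀ (exp_le_smZ N v c) (smZ_pos N v).le

lemma sum_sm (N : ℝ) (v : A → ℝ) : ∑ c, sm N v c = 1 := by
  simp only [sm, smZ]
  rw [← Finset.sum_div]
  exact div_self (smZ_pos N v).ne'

lemma hasDerivAt_exp_seg (N : ℝ) (w d : A → ℝ) (b : A) (t : ℝ) :
    HasDerivAt (fun s : ℝ => Real.exp (N * (w b + s * d b)))
      (Real.exp (N * (w b + t * d b)) * (N * d b)) t := by
  have h1 : HasDerivAt (fun s : ℝ => w b + s * d b) (d b) t := by
    simpa using ((hasDerivAt_id t).mul_const (d b)).const_add (w b)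
  simpa [mul_comm] using ((h1.const_mul N).exp)

lemma hasDerivAt_smZ_seg (N : ℝ) (w d : A → ℝ) (t : ℝ) :
    HasDerivAt (fun s : ℝ => ∑ b, Real.exp (N * (w b + s * d b)))
      (∑ b, Real.exp (N * (w b + t * d b)) * (N * d b)) t :=
  HasDerivAt.fun_sum (fun b _ => hasDerivAt_exp_seg N w d b t)

lemma smZseg_pos (N : ℝ) (w d : A → ℝ) (t : ℝ) :
    0 < ∑ b, Real.exp (N * (w b + t * d b)) :=
  Finset.sum_pos (fun _ _ => Real.exp_pos _) Finset.univ_nonempty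

lemma abs_smZderiv_le {N : ℝ} (hN : 0 < N) (w d : A → ℝ) (t D : ℝ)
    (hD : ∀ b, |d b| ≤ D) :
    |∑ b, Real.exp (N * (w b + t * d b)) * (N * d b)|
      ≤ N * D * ∑ b, Real.exp (N * (w b + t * d b)) := by
  calc |∑ b, Real.exp (N * (w b + t * d b)) * (N * d b)|
      ≤ ∑ b, |Real.exp (N * (w b + t * d b)) * (N * d b)| := Finset.abs_sum_le_sum_abs _ _
    _ ≤ ∑ b, Real.exp (N * (w b + t * d b)) * (N * D) := by
        refine Finset.sum_le_sum fun b _ => ?_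
        rw [abs_mul, abs_of_pos (Real.exp_pos _), abs_mul, abs_of_pos hN]
        exact mul_le_mul_of_nonneg_left (mul_le_mul_of_nonneg_left (hD b) hN.le)
          (Real.exp_pos _).le
    _ = N * D * ∑ b, Real.exp (N * (w b + t * d b)) := by
        rw [← Finset.sum_mul]; ring

lemma scalar_bound {N D E Z dc S1 : ℝ} (hN : 0 < N) (hD : 0 ≤ D) (hE : 0 < E)
    (hZ : 0 < Z) (hEZ : E ≤ Z) (hdc : |dc| ≤ D) (hS1 : |S1| ≤ N * D * Z) :
    |(E * (N * dc) * Z - E * S1) / Z ^ 2| ≤ 2 * N * D := by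
  rw [abs_div, abs_of_pos (pow_pos hZ 2), div_le_iff₀ (pow_pos hZ 2)]
  have h1 : |E * (N * dc) * Z - E * S1| ≤ |E * (N * dc) * Z| + |E * S1| := abs_sub _ _
  have h2 : |E * (N * dc) * Z| = E * (N * |dc|) * Z := by
    rw [abs_mul, abs_mul, abs_mul, abs_of_pos hE, abs_of_pos hZ, abs_of_pos hN]
  have h3 : |E * S1| = E * |S1| := by rw [abs_mul, abs_of_pos hE]
  nlinarith [mul_le_mul_of_nonneg_left hdc (mul_pos hE hN).le,
    mul_le_mul_of_nonneg_left hS1 hE.le,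
    mul_le_mul_of_nonneg_right hEZ (mul_nonneg (mul_nonneg hN.le hD) hZ.le)]

/-- Lipschitz bound for softmax coordinates. -/
lemma sm_lip {N : ℝ} (hN : 0 < N) (v w : A → ℝ) (D : ℝ)
    (hD : ∀ b, |v b - w b| ≤ D) (c : A) :
    |sm N v c - sm N w c| ≤ 2 * N * D := by
  have hDnn : 0 ≤ D := le_trans (abs_nonneg _) (hD (Classical.arbitrary A))
  obtain ⟨d, hd⟩ : ∃ d : A → ℝ, d = fun b => v b - w b := ⟨_, rfl⟩
  have hD' : ∀ b, |d b| ≤ D := by intro b; rw [hd]; exact hD b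
  have key := norm_image_sub_le_of_norm_deriv_le_segment_01'
    (f := fun t : ℝ => Real.exp (N * (w c + t * d c)) / ∑ b, Real.exp (N * (w b + t * d b)))
    (f' := fun t : ℝ =>
      (Real.exp (N * (w c + t * d c)) * (N * d c) * (∑ b, Real.exp (N * (w b + t * d b)))
        - Real.exp (N * (w c + t * d c)) * ∑ b, Real.exp (N * (w b + t * d b)) * (N * d b))
      / (∑ b, Real.exp (N * (w b + t * d b))) ^ 2)
    (C := 2 * N * D)
    (fun t _ => ((hasDerivAt_exp_seg N w d c t).div (hasDerivAt_smZ_seg N w d t)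
      (smZseg_pos N w d t).ne').hasDerivWithinAt)
    (fun t _ => by
      have hZ := smZseg_pos N w d t
      have hEZ : Real.exp (N * (w c + t * d c)) ≤ ∑ b, Real.exp (N * (w b + t * d b)) :=
        Finset.single_le_sum (f := fun b => Real.exp (N * (w b + t * d b)))
          (fun b _ => (Real.exp_pos _).le) (Finset.mem_univ c)
      have h := scalar_bound hN hDnn (Real.exp_pos (N * (w c + t * d c))) hZ hEZ (hD' c)
        (abs_smZderiv_le hN w d t D hD')
      rw [abs_div, abs_of_pos (pow_pos hZ 2)] at h
      simpa using h)
  have e1 : ∀ b, w b + (1 : ℝ) * d b = v b := by intro b; rw [hd]; ring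
  have e0 : ∀ b, w b + (0 : ℝ) * d b = w b := by intro b; ring
  simp only [e1, e0] at key
  simpa [sm, smZ] using key

/-- Second-order Taylor-type bound for log-sum-exp. -/
lemma lse_taylor {N : ℝ} (hN : 0 < N) (v w : A → ℝ) (D : ℝ)
    (hD : ∀ b, |v b - w b| ≤ D) :
    |(1/N) * Real.log (smZ N v) - (1/N) * Real.log (smZ N w)
      - ∑ c, sm N v c * (v c - w c)| ≤ (Fintype.card A) * (2 * N * D) * D := by
  have hDnn : 0 ≤ D := le_trans (abs_nonneg _) (hD (Classical.arbitrary A))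
  obtain ⟨d, hd⟩ : ∃ d : A → ℝ, d = fun b => v b - w b := ⟨_, rfl⟩
  have hD' : ∀ b, |d b| ≤ D := by intro b; rw [hd]; exact hD b
  have key := norm_image_sub_le_of_norm_deriv_le_segment_01'
    (f := fun t : ℝ => (1/N) * Real.log (∑ b, Real.exp (N * (w b + t * d b)))
        - t * (∑ c, sm N v c * d c))
    (f' := fun t : ℝ => (1/N) * ((∑ b, Real.exp (N * (w b + t * d b)) * (N * d b))
        / (∑ b, Real.exp (N * (w b + t * d b)))) - ∑ c, sm N v c * d c)
    (C := (Fintype.card A) * (2 * N * D) * D)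
    (fun t _ => by
      have hda := (((hasDerivAt_smZ_seg N w d t).log
        (smZseg_pos N w d t).ne').const_mul (1/N)).fun_sub
        ((hasDerivAt_id t).mul_const (∑ c, sm N v c * d c))
      simpa only [id_eq, one_mul] using hda.hasDerivWithinAt)
    (fun t ht => by
      have hS := smZseg_pos N w d t
      have hsegD : ∀ b, |(w b + t * d b) - v b| ≤ D := by
        intro b
        have he : w b + t * d b - v b = (t - 1) * d b := by rw [hd]; ring
        have ht1 : |t - 1| ≤ 1 := abs_le.mpr ⟨by linarith [ht.1], by linarith [ht.2.le]⟩
        rw [he, abs_mul]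
        calc |t - 1| * |d b| ≤ 1 * D :=
              mul_le_mul ht1 (hD' b) (abs_nonneg _) zero_le_one
          _ = D := one_mul D
      have h1 : ∑ b, Real.exp (N * (w b + t * d b)) * (N * d b)
          = N * ∑ b, Real.exp (N * (w b + t * d b)) * d b := by
        rw [Finset.mul_sum]; exact Finset.sum_congr rfl fun b _ => by ring
      have h2 : (1/N) * ((∑ b, Real.exp (N * (w b + t * d b)) * (N * d b))
            / (∑ b, Real.exp (N * (w b + t * d b))))
          = ∑ b, sm N (fun b' => w b' + t * d b') b * d b := by
        rw [h1]
        calc (1/N) * ((N * ∑ b, Real.exp (N * (w b + t * d b)) * d b)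
              / (∑ b, Real.exp (N * (w b + t * d b))))
            = (∑ b, Real.exp (N * (w b + t * d b)) * d b)
              / (∑ b, Real.exp (N * (w b + t * d b))) := by
              field_simp
          _ = ∑ b, Real.exp (N * (w b + t * d b)) * d b
              / (∑ b', Real.exp (N * (w b' + t * d b'))) := Finset.sum_div _ _ _
          _ = ∑ b, sm N (fun b' => w b' + t * d b') b * d b := by
              simp only [sm, smZ]
              exact Finset.sum_congr rfl fun b _ => (div_mul_eq_mul_div _ _ _).symm
      have h3 : (∑ b, sm N (fun b' => w b' + t * d b') b * d b) - ∑ c, sm N v c * d c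
          = ∑ b, (sm N (fun b' => w b' + t * d b') b - sm N v b) * d b := by
        rw [← Finset.sum_sub_distrib]
        exact Finset.sum_congr rfl fun b _ => (sub_mul _ _ _).symm
      show ‖1 / N * ((∑ b, Real.exp (N * (w b + t * d b)) * (N * d b))
          / ∑ b, Real.exp (N * (w b + t * d b))) - ∑ c, sm N v c * d c‖
          ≤ (Fintype.card A) * (2 * N * D) * D
      rw [Real.norm_eq_abs, h2, h3]
      calc |∑ b, (sm N (fun b' => w b' + t * d b') b - sm N v b) * d b|
          ≤ ∑ b, |(sm N (fun b' => w b' + t * d b') b - sm N v b) * d b| :=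
            Finset.abs_sum_le_sum_abs _ _
        _ ≤ ∑ _b : A, (2 * N * D) * D := by
            refine Finset.sum_le_sum fun b _ => ?_
            rw [abs_mul]
            exact mul_le_mul (sm_lip hN _ v D hsegD b) (hD' b) (abs_nonneg _)
              (by positivity)
        _ = (Fintype.card A) * (2 * N * D) * D := by
            rw [Finset.sum_const, Finset.card_univ, nsmul_eq_mul]; ring)
  have e1 : ∀ b, w b + d b = v b := by intro b; rw [hd]; ring
  simp only [one_mul, zero_mul, add_zero, sub_zero, mul_zero, zero_sub,
    Real.norm_eq_abs, e1] at key
  have hP : ∑ c, sm N v c * (v c - w c) = ∑ c, sm N v c * d c := by rw [hd]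
  have hre : (1/N) * Real.log (smZ N v) - (1/N) * Real.log (smZ N w)
      - ∑ c, sm N v c * d c
      = ((1/N) * Real.log (∑ b, Real.exp (N * v b)) - ∑ c, sm N v c * d c)
        - (1/N) * Real.log (∑ b, Real.exp (N * w b)) := by
    simp only [smZ]; ring
  rw [hP, hre]
  exact key


end SOVIAux

open SOVIAux

section MainAux
set_option linter.unusedSectionVars false

variable {S A : Type*} [Fintype S] [Fintype A] [Nonempty S] [Nonempty A]

lemma abs_le_qSupNorm (x : S × A → ℝ) (ia : S × A) : |x ia| ≤ qSupNorm x := by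
  unfold qSupNorm; exact Finset.le_sup' (fun ia : S × A => |x ia|) (Finset.mem_univ ia)

lemma qSupNorm_le {x : S × A → ℝ} {c : ℝ} (h : ∀ ia, |x ia| ≤ c) : qSupNorm x ≤ c := by
  unfold qSupNorm; exact Finset.sup'_le _ _ (fun ia _ => h ia)

lemma qSupNorm_nonneg (x : S × A → ℝ) : 0 ≤ qSupNorm x :=
  le_trans (abs_nonneg _) (abs_le_qSupNorm x (Classical.arbitrary _))

lemma jacU_apply (p : S → A → S → ℝ) (γ N : ℝ) (QQ : S × A → ℝ) (ia : S × A)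
    (k : S) (c : A) :
    jacU p γ N QQ ia (k, c) = γ * p ia.1 ia.2 k * sm N (fun b => QQ (k, b)) c := by
  simp [jacU, sm, smZ]

lemma jacU_nonneg_s18 (p : S → A → S → ℝ) (hp0 : ∀ i a j, 0 ≤ p i a j)
    {γ : ℝ} (hγ0 : 0 ≤ γ) (N : ℝ) (QQ : S × A → ℝ) (ia kc : S × A) :
    0 ≤ jacU p γ N QQ ia kc := by
  obtain ⟨k, c⟩ := kc
  rw [jacU_apply]
  exact mul_nonneg (mul_nonneg hγ0 (hp0 _ _ _)) (sm_nonneg N _ c)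

lemma jacU_rowsum_s18 (p : S → A → S → ℝ) (hp1 : ∀ i a, ∑ j, p i a j = 1)
    (γ N : ℝ) (QQ : S × A → ℝ) (ia : S × A) :
    ∑ kc : S × A, jacU p γ N QQ ia kc = γ := by
  rw [Fintype.sum_prod_type]
  have h : ∀ k, ∑ c, jacU p γ N QQ ia (k, c) = γ * p ia.1 ia.2 k := by
    intro k
    have : ∑ c, jacU p γ N QQ ia (k, c)
        = γ * p ia.1 ia.2 k * ∑ c, sm N (fun b => QQ (k, b)) c := by
      rw [Finset.mul_sum]
      exact Finset.sum_congr rfl fun c _ => jacU_apply p γ N QQ ia k c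
    rw [this, sum_sm, mul_one]
  simp_rw [h]
  rw [← Finset.mul_sum, hp1, mul_one]

lemma jac_mulVec_bound (p : S → A → S → ℝ) (hp0 : ∀ i a j, 0 ≤ p i a j)
    (hp1 : ∀ i a, ∑ j, p i a j = 1) {γ : ℝ} (hγ0 : 0 ≤ γ) (N : ℝ)
    (QQ : S × A → ℝ) (z : S × A → ℝ) (C : ℝ) (hC : ∀ kc, |z kc| ≤ C) (ia : S × A) :
    |(jacU p γ N QQ).mulVec z ia| ≤ γ * C := by
  have hC0 : 0 ≤ C := le_trans (abs_nonneg _) (hC (Classical.arbitrary _))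
  have hmv : (jacU p γ N QQ).mulVec z ia = ∑ kc, jacU p γ N QQ ia kc * z kc := rfl
  rw [hmv]
  calc |∑ kc, jacU p γ N QQ ia kc * z kc|
      ≤ ∑ kc, |jacU p γ N QQ ia kc * z kc| := Finset.abs_sum_le_sum_abs _ _
    _ ≤ ∑ kc, jacU p γ N QQ ia kc * C := by
        refine Finset.sum_le_sum fun kc _ => ?_
        rw [abs_mul, abs_of_nonneg (jacU_nonneg_s18 p hp0 hγ0 N QQ ia kc)]
        exact mul_le_mul_of_nonneg_left (hC kc) (jacU_nonneg_s18 p hp0 hγ0 N QQ ia kc)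
    _ = (∑ kc, jacU p γ N QQ ia kc) * C := (Finset.sum_mul _ _ _).symm
    _ = γ * C := by rw [jacU_rowsum_s18 p hp1 γ N QQ ia]

lemma err_bound (p : S → A → S → ℝ) (hp0 : ∀ i a j, 0 ≤ p i a j)
    (hp1 : ∀ i a, ∑ j, p i a j = 1) (r : S → A → ℝ) {γ : ℝ} (hγ0 : 0 ≤ γ)
    {N : ℝ} (hN : 0 < N) (QQ Qs : S × A → ℝ) (D : ℝ)
    (hD : ∀ kc, |QQ kc - Qs kc| ≤ D) (ia : S × A) :
    |(modBellmanU p r γ N QQ ia - modBellmanU p r γ N Qs ia)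
        - (jacU p γ N QQ).mulVec (QQ - Qs) ia|
      ≤ γ * ((Fintype.card A) * (2 * N * D) * D) := by
  have hUd : modBellmanU p r γ N QQ ia - modBellmanU p r γ N Qs ia
      = γ * ∑ j, p ia.1 ia.2 j * ((1/N) * Real.log (smZ N (fun c => QQ (j, c)))
          - (1/N) * Real.log (smZ N (fun c => Qs (j, c)))) := by
    simp only [modBellmanU, smZ]
    rw [add_sub_add_left_eq_sub, ← mul_sub, ← Finset.sum_sub_distrib]
    rw [Finset.mul_sum, Finset.mul_sum]
    exact Finset.sum_congr rfl fun j _ => by ring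
  have hJx : (jacU p γ N QQ).mulVec (QQ - Qs) ia
      = γ * ∑ j, p ia.1 ia.2 j *
          (∑ c, sm N (fun b => QQ (j, b)) c * (QQ (j, c) - Qs (j, c))) := by
    have h0 : (jacU p γ N QQ).mulVec (QQ - Qs) ia
        = ∑ kc : S × A, jacU p γ N QQ ia kc * (QQ - Qs) kc := rfl
    rw [h0, Fintype.sum_prod_type, Finset.mul_sum]
    refine Finset.sum_congr rfl fun j _ => ?_
    rw [Finset.mul_sum, Finset.mul_sum]
    refine Finset.sum_congr rfl fun c _ => ?_
    rw [jacU_apply]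
    simp only [Pi.sub_apply]
    ring
  rw [hUd, hJx, ← mul_sub, ← Finset.sum_sub_distrib]
  have hterm : ∀ j, p ia.1 ia.2 j * ((1/N) * Real.log (smZ N (fun c => QQ (j, c)))
          - (1/N) * Real.log (smZ N (fun c => Qs (j, c))))
        - p ia.1 ia.2 j * (∑ c, sm N (fun b => QQ (j, b)) c * (QQ (j, c) - Qs (j, c)))
      = p ia.1 ia.2 j * ((1/N) * Real.log (smZ N (fun c => QQ (j, c)))
          - (1/N) * Real.log (smZ N (fun c => Qs (j, c)))
          - ∑ c, sm N (fun b => QQ (j, b)) c * (QQ (j, c) - Qs (j, c))) := fun j => by ring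
  simp only [hterm]
  rw [abs_mul, abs_of_nonneg hγ0]
  refine mul_le_mul_of_nonneg_left ?_ hγ0
  calc |∑ j, p ia.1 ia.2 j * ((1/N) * Real.log (smZ N (fun c => QQ (j, c)))
          - (1/N) * Real.log (smZ N (fun c => Qs (j, c)))
          - ∑ c, sm N (fun b => QQ (j, b)) c * (QQ (j, c) - Qs (j, c)))|
      ≤ ∑ j, |p ia.1 ia.2 j * ((1/N) * Real.log (smZ N (fun c => QQ (j, c)))
          - (1/N) * Real.log (smZ N (fun c => Qs (j, c)))
          - ∑ c, sm N (fun b => QQ (j, b)) c * (QQ (j, c) - Qs (j, c)))| :=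
        Finset.abs_sum_le_sum_abs _ _
    _ ≤ ∑ j, p ia.1 ia.2 j * ((Fintype.card A) * (2 * N * D) * D) := by
        refine Finset.sum_le_sum fun j _ => ?_
        rw [abs_mul, abs_of_nonneg (hp0 _ _ _)]
        refine mul_le_mul_of_nonneg_left ?_ (hp0 _ _ _)
        exact lse_taylor hN (fun c => QQ (j, c)) (fun c => Qs (j, c)) D
          (fun c => hD (j, c))
    _ = ((Fintype.card A) * (2 * N * D) * D) := by
        rw [← Finset.sum_mul, hp1, one_mul]

end MainAux

/-- **Second order convergence of SOVI.** If `Q*` is the unique fixed point of the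
modified Bellman operator `U` and `Q_{n+1} = Q_n − (I − J_U(Q_n))⁻¹ (Q_n − U Q_n)`
are the SOVI iterates, then there is `k > 0` with
`‖Q_{n+1} − Q*‖ ≤ k·‖Q_n − Q*‖²` for all `n`. -/
theorem sovi_second_order_convergence {S A : Type*}
    [Fintype S] [Fintype A] [Nonempty S] [Nonempty A] [DecidableEq S] [DecidableEq A]
    (p : S → A → S → ℝ) (hp0 : ∀ i a j, 0 ≤ p i a j) (hp1 : ∀ i a, ∑ j, p i a j = 1)
    (r : S → A → ℝ) (γ : ℝ) (hγ0 : 0 ≤ γ) (hγ1 : γ < 1) (N : ℝ) (hN : 0 < N)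
    (Qstar : S × A → ℝ) (hQstar : modBellmanU p r γ N Qstar = Qstar)
    (Q : ℕ → S × A → ℝ)
    (hiter : ∀ n : ℕ, Q (n + 1) = Q n -
      ((1 : Matrix (S × A) (S × A) ℝ) - jacU p γ N (Q n))⁻¹.mulVec
        (Q n - modBellmanU p r γ N (Q n))) :
    ∃ k : ℝ, 0 < k ∧ ∀ n : ℕ,
      qSupNorm (Q (n + 1) - Qstar) ≤ k * qSupNorm (Q n - Qstar) ^ 2 := by
  have h1γ : 0 < 1 - γ := by linarith
  have hcA0 : 0 < ((Fintype.card A : ℝ)) := by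
    have := Fintype.card_pos (α := A); exact_mod_cast this
  have hknum : 0 < γ * (2 * N * (Fintype.card A : ℝ)) + 1 := by
    have h2 : 0 ≤ γ * (2 * N * (Fintype.card A : ℝ)) :=
      mul_nonneg hγ0 (mul_nonneg (by linarith) hcA0.le)
    linarith
  refine ⟨(γ * (2 * N * (Fintype.card A : ℝ)) + 1) / (1 - γ), div_pos hknum h1γ,
    fun n => ?_⟩
  have hit := hiter n
  set J := jacU p γ N (Q n) with hJ
  set M := (1 : Matrix (S × A) (S × A) ℝ) - J with hM
  set x := Q n - Qstar with hx
  set y := Q (n + 1) - Qstar with hy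
  set dn := qSupNorm x with hdn
  have hdn0 : 0 ≤ dn := qSupNorm_nonneg x
  have hJb : ∀ z : S × A → ℝ, ∀ ia, |J.mulVec z ia| ≤ γ * qSupNorm z := fun z ia =>
    jac_mulVec_bound p hp0 hp1 hγ0 N (Q n) z (qSupNorm z) (abs_le_qSupNorm z) ia
  have hdet : M.det ≠ 0 := by
    intro h
    obtain ⟨z, hz0, hz⟩ := Matrix.exists_mulVec_eq_zero_iff.mpr h
    have hz' : z = J.mulVec z := by
      rw [hM, Matrix.sub_mulVec, Matrix.one_mulVec, sub_eq_zero] at hz; exact hz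
    have hle : qSupNorm z ≤ γ * qSupNorm z := by
      refine qSupNorm_le fun ia => ?_
      conv_lhs => rw [hz']
      exact hJb z ia
    have hzn : qSupNorm z ≤ 0 := by nlinarith [qSupNorm_nonneg z]
    apply hz0
    funext ia
    have h1 := abs_le_qSupNorm z ia
    have h2 : |z ia| = 0 := le_antisymm (h1.trans hzn) (abs_nonneg _)
    simpa using abs_eq_zero.mp h2
  have hdetU : IsUnit M.det := isUnit_iff_ne_zero.mpr hdet
  have hMinv : ∀ e : S × A → ℝ, M.mulVec (M⁻¹.mulVec e) = e := by
    intro e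
    rw [Matrix.mulVec_mulVec, Matrix.mul_nonsing_inv _ hdetU, Matrix.one_mulVec]
  have hy2 : y = x - M⁻¹.mulVec (Q n - modBellmanU p r γ N (Q n)) := by
    rw [hy, hit, hx]; ring
  have hMy : M.mulVec y = (modBellmanU p r γ N (Q n) - modBellmanU p r γ N Qstar)
      - J.mulVec x := by
    rw [hQstar, hy2, Matrix.mulVec_sub, hMinv, hM, Matrix.sub_mulVec, Matrix.one_mulVec,
      hx]
    ring
  have hyJM : y = J.mulVec y + M.mulVec y := by
    rw [hM, Matrix.sub_mulVec, Matrix.one_mulVec]; ring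
  have hE : ∀ ia, |M.mulVec y ia| ≤
      γ * ((Fintype.card A : ℝ) * (2 * N * dn) * dn) := by
    intro ia
    rw [hMy]
    have hDx : ∀ kc, |Q n kc - Qstar kc| ≤ dn := by
      intro kc
      have := abs_le_qSupNorm x kc
      rw [hx] at this
      simpa using this
    have h := err_bound p hp0 hp1 r hγ0 hN (Q n) Qstar dn hDx ia
    rw [hJ, hx]
    simpa using h
  have hyb : ∀ ia, |y ia| ≤ γ * qSupNorm y
      + γ * ((Fintype.card A : ℝ) * (2 * N * dn) * dn) := by
    intro ia
    conv_lhs => rw [hyJM]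
    calc |(J.mulVec y + M.mulVec y) ia|
        = |J.mulVec y ia + M.mulVec y ia| := by simp [Pi.add_apply]
      _ ≤ |J.mulVec y ia| + |M.mulVec y ia| := abs_add_le _ _
      _ ≤ γ * qSupNorm y + γ * ((Fintype.card A : ℝ) * (2 * N * dn) * dn) :=
          add_le_add (hJb y ia) (hE ia)
  have hyq : qSupNorm y ≤ γ * qSupNorm y
      + γ * ((Fintype.card A : ℝ) * (2 * N * dn) * dn) := qSupNorm_le hyb
  rw [div_mul_eq_mul_div, le_div_iff₀ h1γ]
  nlinarith [sq_nonneg dn, qSupNorm_nonneg y]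
end
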